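/- Let F_hex = x1x2x3x4 + x2x3x6x7 + x3x4x7x8 + x1x4x5x8 + x1x2x5x6 + x5x6x7x8 and A = ℝ[∂_1,…,∂_8]/Ann(F_hex). Then ℓ = ∂_1 + ∂_2 + ⋯ + ∂_8 is a strong Lefschetz element of A (so A has the strong Lefschetz property), but A does not satisfy the Hodge–Riemann relation with respect to ℓ. -/

import Mathlib

open MvPolynomial

noncomputable section

lemma pderiv_commute {n : ℕ} (i j : Fin n) (f : MvPolynomial (Fin n) ℝ) :
    pderiv i (pderiv j f) = pderiv j (pderiv i f) := by
  rcases eq_or_ne i j with rfl | hij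
  · rfl
  · induction f using MvPolynomial.induction_on' with
    | monomial m a =>
        simp only [pderiv_monomial]
        have h1 : (m - Finsupp.single j 1 : Fin n →₀ ℕ) i = m i := by
          rw [Finsupp.tsub_apply, Finsupp.single_eq_of_ne' hij.symm, tsub_zero]
        have h2 : (m - Finsupp.single i 1 : Fin n →₀ ℕ) j = m j := by
          rw [Finsupp.tsub_apply, Finsupp.single_eq_of_ne' hij, tsub_zero]
        rw [h1, h2, tsub_right_comm]
        congr 1
        ring
    | add p q hp hq => simp [hp, hq]

/-- The set of the partial derivative operators `∂ᵢ` on `ℝ[x₁, …, xₙ]`. -/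
def pdSet (n : ℕ) : Set (Module.End ℝ (MvPolynomial (Fin n) ℝ)) :=
  Set.range fun i : Fin n =>
    ((pderiv i : Derivation ℝ (MvPolynomial (Fin n) ℝ) (MvPolynomial (Fin n) ℝ)) :
      MvPolynomial (Fin n) ℝ →ₗ[ℝ] MvPolynomial (Fin n) ℝ)

instance pdCommRing (n : ℕ) : CommRing (Algebra.adjoin ℝ (pdSet n)) :=
  Algebra.adjoinCommRingOfComm ℝ (by
    rintro _ ⟨i, rfl⟩ _ ⟨j, rfl⟩
    apply LinearMap.ext
    intro f
    exact pderiv_commute i j f)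

/-- The algebra map sending a polynomial `f` (in the "∂ variables") to the differential
operator `f(∂₁, …, ∂ₙ)` acting on `ℝ[x₁, …, xₙ]`; thus `dop n f F` is the result of
applying the differential operator `f(∂₁, …, ∂ₙ)` to the polynomial `F`. -/
def dop (n : ℕ) : MvPolynomial (Fin n) ℝ →ₐ[ℝ] Module.End ℝ (MvPolynomial (Fin n) ℝ) :=
  (Algebra.adjoin ℝ (pdSet n)).val.comp
    (aeval fun i : Fin n =>
      (⟨_, Algebra.subset_adjoin (Set.mem_range_self i)⟩ : Algebra.adjoin ℝ (pdSet n)))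

/-- `Ann F`, the annihilator of `F`: the ideal of all differential-operator polynomials `f`
with `f(∂₁, …, ∂ₙ) F = 0`. -/
def annIdeal {n : ℕ} (F : MvPolynomial (Fin n) ℝ) : Ideal (MvPolynomial (Fin n) ℝ) where
  carrier := {f | dop n f F = 0}
  add_mem' := by
    intro a b ha hb
    simp only [Set.mem_setOf_eq] at *
    rw [map_add, LinearMap.add_apply, ha, hb, add_zero]
  zero_mem' := by
    simp only [Set.mem_setOf_eq, map_zero, LinearMap.zero_apply]
  smul_mem' := by
    intro c f hf
    simp only [Set.mem_setOf_eq] at *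
    rw [smul_eq_mul, map_mul, Module.End.mul_apply, hf, map_zero]

/-- The Artinian Gorenstein algebra `A_F = ℝ[∂₁, …, ∂ₙ]/Ann(F)`. -/
abbrev AF {n : ℕ} (F : MvPolynomial (Fin n) ℝ) := MvPolynomial (Fin n) ℝ ⧸ annIdeal F

/-- The degree-`k` homogeneous component `(A_F)_k` of `A_F`, as a submodule of `A_F`:
the image of the space of homogeneous polynomials of degree `k` under the quotient map. -/
def gradeA {n : ℕ} (F : MvPolynomial (Fin n) ℝ) (k : ℕ) : Submodule ℝ (AF F) :=
  Submodule.map (Ideal.Quotient.mkₐ ℝ (annIdeal F)).toLinearMap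
    (homogeneousSubmodule (Fin n) ℝ k)

/-- `ℓ ∈ A_F` is a strong Lefschetz element of `A_F` (with socle degree `s`) if the
multiplication map `×ℓ^(s-2k) : (A_F)_k → (A_F)_(s-k)` is bijective for every `k` with
`0 ≤ k ≤ s/2`. -/
def IsSLelem {n : ℕ} (F : MvPolynomial (Fin n) ℝ) (s : ℕ) (ℓ : AF F) : Prop :=
  ∀ k : ℕ, 2 * k ≤ s →
    Set.BijOn (fun f => ℓ ^ (s - 2 * k) * f) (gradeA F k) (gradeA F (s - k))

/-- `A_F` (with socle degree `s`) has the strong Lefschetz property. -/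
def HasSLP {n : ℕ} (F : MvPolynomial (Fin n) ℝ) (s : ℕ) : Prop :=
  ∃ ℓ ∈ gradeA F 1, IsSLelem F s ℓ

/-- `A_F` (with socle degree `s`) satisfies the Hodge–Riemann relation with respect to the
class `ℓ` of a linear form `L`: for every `k` with `0 ≤ k ≤ s/2`, the bilinear form
`Q^k_ℓ(f, g) = (-1)^k P^k(f, ℓ^(s-2k) g)` (where `P^k(f, g) = f g F` is the Poincaré duality
pairing) is positive definite on the kernel of `×ℓ^(s-2k+1) : (A_F)_k → (A_F)_(s-k+1)`,
i.e. `Q^k_ℓ(f, f) > 0` for every nonzero `f ∈ (A_F)_k` in that kernel. -/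
def SatisfiesHRR {n : ℕ} (F : MvPolynomial (Fin n) ℝ) (s : ℕ) (L : MvPolynomial (Fin n) ℝ) :
    Prop :=
  ∀ k : ℕ, 2 * k ≤ s →
    ∀ f ∈ homogeneousSubmodule (Fin n) ℝ k,
      dop n (L ^ (s - 2 * k + 1) * f) F = 0 →
      Ideal.Quotient.mk (annIdeal F) f ≠ 0 →
      0 < (-1 : ℝ) ^ k * constantCoeff (dop n (L ^ (s - 2 * k) * f * f) F)

/-- The facet polynomial of the regular hexahedron (cube)
(vertices `0,…,7` standing for `1,…,8`). -/
def Fhex : MvPolynomial (Fin 8) ℝ :=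
  X 0 * X 1 * X 2 * X 3 + X 1 * X 2 * X 5 * X 6 + X 2 * X 3 * X 6 * X 7 +
    X 0 * X 3 * X 4 * X 7 + X 0 * X 1 * X 4 * X 5 + X 4 * X 5 * X 6 * X 7


-- ===================== auxiliary lemmas =====================

lemma Finsupp.degree_add' {σ : Type*} (a b : σ →₀ ℕ) : (a + b).degree = a.degree + b.degree := by
  simp [Finsupp.degree_eq_weight_one, map_add]

lemma Finsupp.degree_single' {σ : Type*} (i : σ) (k : ℕ) : (Finsupp.single i k).degree = k := by
  simp [Finsupp.degree_eq_weight_one, Finsupp.weight_apply, Finsupp.sum]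
  rcases eq_or_ne k 0 with rfl | hk
  · simp
  · rw [Finsupp.support_single_ne_zero _ hk]; simp

lemma degree_eq_one {σ : Type*} (m : σ →₀ ℕ) (h : m.degree = 1) : ∃ i, m = Finsupp.single i 1 := by
  have hm0 : m ≠ 0 := by
    intro h0; rw [h0] at h; simp [map_zero] at h
  obtain ⟨i, hi⟩ := Finsupp.ne_iff.mp hm0
  simp only [Finsupp.coe_zero, Pi.zero_apply] at hi
  have h1 : 1 ≤ m i := Nat.one_le_iff_ne_zero.mpr hi
  have hle : Finsupp.single i 1 ≤ m := by
    rw [Finsupp.single_le_iff]; exact h1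
  obtain ⟨m', hm'⟩ : ∃ m', m = Finsupp.single i 1 + m' := ⟨m - Finsupp.single i 1, by
    rw [add_tsub_cancel_of_le hle]⟩
  have hd0 : m'.degree = 0 := by
    have h2 := h
    rw [hm', Finsupp.degree_add', Finsupp.degree_single'] at h2
    omega
  rw [Finsupp.degree_eq_zero_iff] at hd0
  exact ⟨i, by rw [hm', hd0, add_zero]⟩

lemma isHomogeneous_degree {σ R : Type*} [CommSemiring R] {p : MvPolynomial σ R} {d : ℕ}
    (h : p.IsHomogeneous d) {m : σ →₀ ℕ} (hc : coeff m p ≠ 0) : m.degree = d := by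
  have := h hc
  rwa [Finsupp.degree_eq_weight_one]

lemma pderiv_isHomogeneous {n : ℕ} {F : MvPolynomial (Fin n) ℝ} {d : ℕ} (i : Fin n)
    (h : F.IsHomogeneous d) : (pderiv i F).IsHomogeneous (d - 1) := by
  rw [F.as_sum, map_sum]
  apply IsHomogeneous.sum
  intro m hm
  rw [pderiv_monomial]
  rcases eq_or_ne (coeff m F * m i) 0 with h0 | h0
  · rw [h0, monomial_zero]; exact isHomogeneous_zero _ _ _
  · apply isHomogeneous_monomial
    have hmi : m i ≠ 0 := fun hh => h0 (by rw [hh, Nat.cast_zero, mul_zero])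
    have hc : coeff m F ≠ 0 := fun hh => h0 (by rw [hh, zero_mul])
    have hdeg : m.degree = d := isHomogeneous_degree h hc
    have hle : Finsupp.single i 1 ≤ m := by
      rw [Finsupp.single_le_iff]; omega
    have h3 : m - Finsupp.single i 1 + Finsupp.single i 1 = m := tsub_add_cancel_of_le hle
    have h2 := congrArg Finsupp.degree h3
    rw [Finsupp.degree_add', Finsupp.degree_single'] at h2
    omega

lemma homog_one_eq {n : ℕ} (p : MvPolynomial (Fin n) ℝ) (hp : p.IsHomogeneous 1) :
    p = ∑ i, C (coeff (Finsupp.single i 1) p) * X i := by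
  ext m
  rw [coeff_sum]
  simp only [coeff_C_mul, coeff_X']
  by_cases hm : ∃ i, m = Finsupp.single i 1
  · obtain ⟨j, rfl⟩ := hm
    rw [Finset.sum_eq_single j]
    · simp
    · intro i _ hij
      rw [if_neg (fun hh => hij (Finsupp.single_left_injective one_ne_zero hh)), mul_zero]
    · intro h; exact absurd (Finset.mem_univ j) h
  · have h0 : coeff m p = 0 := by
      by_contra hc
      exact hm (degree_eq_one m (isHomogeneous_degree hp hc))
    rw [h0, Finset.sum_eq_zero]
    intro i _
    rw [if_neg fun hh => hm ⟨i, hh.symm⟩, mul_zero]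

lemma homog_zero_eq {n : ℕ} (p : MvPolynomial (Fin n) ℝ) (hp : p.IsHomogeneous 0) :
    p = C (constantCoeff p) := by
  ext m
  rcases eq_or_ne m 0 with rfl | hm
  · simp [constantCoeff_eq]
  · rw [coeff_C, if_neg (Ne.symm hm)]
    by_contra hc
    exact hm (Finsupp.degree_eq_zero_iff m |>.mp (isHomogeneous_degree hp hc))

-- ===================== dop lemmas =====================

lemma dop_X_apply {n : ℕ} (i : Fin n) (G : MvPolynomial (Fin n) ℝ) :
    dop n (X i) G = pderiv i G := by
  simp [dop, aeval_X]

lemma dop_mul_apply {n : ℕ} (p q G : MvPolynomial (Fin n) ℝ) :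
    dop n (p * q) G = dop n p (dop n q G) := by
  rw [map_mul]; rfl

lemma dop_add_apply {n : ℕ} (p q G : MvPolynomial (Fin n) ℝ) :
    dop n (p + q) G = dop n p G + dop n q G := by
  rw [map_add]; rfl

lemma dop_sub_apply {n : ℕ} (p q G : MvPolynomial (Fin n) ℝ) :
    dop n (p - q) G = dop n p G - dop n q G := by
  rw [map_sub]; rfl

lemma dop_C_mul_apply {n : ℕ} (c : ℝ) (p G : MvPolynomial (Fin n) ℝ) :
    dop n (C c * p) G = c • dop n p G := by
  rw [map_mul]
  have h : dop n (C c) = algebraMap ℝ _ c := by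
    simpa using (dop n).commutes c
  simp [h, Module.End.mul_apply, Module.algebraMap_end_apply]

lemma dop_C_apply {n : ℕ} (c : ℝ) (G : MvPolynomial (Fin n) ℝ) :
    dop n (C c) G = c • G := by
  simpa using dop_C_mul_apply c 1 G

lemma dop_monomial_isHomogeneous {n : ℕ} :
    ∀ (d : ℕ) (m : Fin n →₀ ℕ), m.degree = d → ∀ (a : ℝ) (F : MvPolynomial (Fin n) ℝ) (s : ℕ),
      F.IsHomogeneous s → (dop n (monomial m a) F).IsHomogeneous (s - d) := by
  intro d
  induction d with
  | zero =>
      intro m hm a F s hF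
      rw [Finsupp.degree_eq_zero_iff] at hm
      subst hm
      rw [monomial_zero', dop_C_apply, smul_eq_C_mul]
      simpa using hF.C_mul a
  | succ d ih =>
      intro m hm a F s hF
      have hm0 : m ≠ 0 := by
        intro h0; rw [h0, map_zero] at hm; omega
      obtain ⟨i, hi⟩ := Finsupp.ne_iff.mp hm0
      simp only [Finsupp.coe_zero, Pi.zero_apply] at hi
      have hle : Finsupp.single i 1 ≤ m := by
        rw [Finsupp.single_le_iff]; omega
      have hmeq : m - Finsupp.single i 1 + Finsupp.single i 1 = m := tsub_add_cancel_of_le hle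
      have hdeg : (m - Finsupp.single i 1).degree = d := by
        have := congrArg Finsupp.degree hmeq
        rw [Finsupp.degree_add', Finsupp.degree_single'] at this
        omega
      have hsplit : monomial m a = monomial (m - Finsupp.single i 1) a * X i := by
        rw [X, monomial_mul, mul_one, hmeq]
      rw [hsplit, dop_mul_apply, dop_X_apply]
      have := ih (m - Finsupp.single i 1) hdeg a (pderiv i F) (s - 1)
        (pderiv_isHomogeneous i hF)
      have hn : s - 1 - d = s - (d + 1) := by omega
      rw [hn] at this
      exact this

lemma dop_isHomogeneous {n : ℕ} {p F : MvPolynomial (Fin n) ℝ} {d s : ℕ}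
    (hp : p.IsHomogeneous d) (hF : F.IsHomogeneous s) :
    (dop n p F).IsHomogeneous (s - d) := by
  rw [p.as_sum, map_sum]
  rw [LinearMap.coe_sum, Finset.sum_apply]
  apply IsHomogeneous.sum
  intro m hm
  exact dop_monomial_isHomogeneous d m
    (isHomogeneous_degree hp (mem_support_iff.mp hm)) _ F s hF
-- ===================== concrete polynomials =====================
set_option maxHeartbeats 1600000

def G3 : MvPolynomial (Fin 8) ℝ := X 0*X 1*X 2 + X 0*X 1*X 3 + X 0*X 1*X 4 + X 0*X 1*X 5 + X 0*X 2*X 3 + X 0*X 3*X 4 + X 0*X 3*X 7 + X 0*X 4*X 5 + X 0*X 4*X 7 + X 1*X 2*X 3 + X 1*X 2*X 5 + X 1*X 2*X 6 + X 1*X 4*X 5 + X 1*X 5*X 6 + X 2*X 3*X 6 + X 2*X 3*X 7 + X 2*X 5*X 6 + X 2*X 6*X 7 + X 3*X 4*X 7 + X 3*X 6*X 7 + X 4*X 5*X 6 + X 4*X 5*X 7 + X 4*X 6*X 7 + X 5*X 6*X 7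

def Qp : MvPolynomial (Fin 8) ℝ := C 4*X 0*X 1 + C 2*X 0*X 2 + C 4*X 0*X 3 + C 4*X 0*X 4 + C 2*X 0*X 5 + C 2*X 0*X 7 + C 4*X 1*X 2 + C 2*X 1*X 3 + C 2*X 1*X 4 + C 4*X 1*X 5 + C 2*X 1*X 6 + C 4*X 2*X 3 + C 2*X 2*X 5 + C 4*X 2*X 6 + C 2*X 2*X 7 + C 2*X 3*X 4 + C 2*X 3*X 6 + C 4*X 3*X 7 + C 4*X 4*X 5 + C 2*X 4*X 6 + C 4*X 4*X 7 + C 4*X 5*X 6 + C 2*X 5*X 7 + C 4*X 6*X 7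

def G1 : MvPolynomial (Fin 8) ℝ := C 18*X 0 + C 18*X 1 + C 18*X 2 + C 18*X 3 + C 18*X 4 + C 18*X 5 + C 18*X 6 + C 18*X 7

lemma pderiv_ofNat {n : ℕ} (i : Fin n) (k : ℕ) [k.AtLeastTwo] :
    pderiv i (no_index (OfNat.ofNat k) : MvPolynomial (Fin n) ℝ) = 0 := by
  rw [← map_ofNat (C : ℝ →+* MvPolynomial (Fin n) ℝ) k, pderiv_C]

lemma dop_L_apply (G : MvPolynomial (Fin 8) ℝ) :
    dop 8 (∑ i, X i) G = ∑ i, pderiv i G := by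
  rw [map_sum, LinearMap.coe_sum, Finset.sum_apply]
  exact Finset.sum_congr rfl fun i _ => dop_X_apply i G

lemma c1 : dop 8 (∑ i, X i) Fhex = G3 := by
  rw [dop_L_apply, Fin.sum_univ_eight]
  simp [Fhex, G3, pderiv_X_self, pderiv_X_of_ne, pderiv_mul, pderiv_C_mul, pderiv_ofNat, map_ofNat]
  ring

lemma c2 : dop 8 (∑ i, X i) G3 = Qp := by
  rw [dop_L_apply, Fin.sum_univ_eight]
  simp [G3, Qp, pderiv_X_self, pderiv_X_of_ne, pderiv_mul, pderiv_C_mul, pderiv_ofNat, map_ofNat]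
  ring

lemma c3 : dop 8 (∑ i, X i) Qp = G1 := by
  rw [dop_L_apply, Fin.sum_univ_eight]
  simp [G1, Qp, pderiv_X_self, pderiv_X_of_ne, pderiv_mul, pderiv_C_mul, pderiv_ofNat, map_ofNat]
  ring

lemma c4 : dop 8 (∑ i, X i) G1 = C 144 := by
  rw [dop_L_apply, Fin.sum_univ_eight]
  simp [G1, pderiv_X_self, pderiv_X_of_ne, pderiv_mul, pderiv_C_mul, pderiv_ofNat, map_ofNat]
  norm_num

lemma hQ : dop 8 ((∑ i, X i) ^ 2) Fhex = Qp := by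
  rw [pow_two, dop_mul_apply, c1, c2]

lemma h144 : dop 8 ((∑ i, X i) ^ 4) Fhex = C 144 := by
  rw [show ((∑ i, X i : MvPolynomial (Fin 8) ℝ)) ^ 4
      = (∑ i, X i) * ((∑ i, X i) * ((∑ i, X i) * (∑ i, X i))) from by ring,
    dop_mul_apply, dop_mul_apply, dop_mul_apply, c1, c2, c3, c4]

lemma hL3 : dop 8 ((∑ i, X i) ^ 3) Fhex = G1 := by
  rw [show ((∑ i, X i : MvPolynomial (Fin 8) ℝ)) ^ 3
      = (∑ i, X i) * ((∑ i, X i) * (∑ i, X i)) from by ring,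
    dop_mul_apply, dop_mul_apply, c1, c2, c3]
-- ===================== the linear maps data =====================
def apoly0 : MvPolynomial (Fin 8) ℝ := C 4*X 1 + C 2*X 2 + C 4*X 3 + C 4*X 4 + C 2*X 5 + C 2*X 7
def apoly1 : MvPolynomial (Fin 8) ℝ := C 4*X 0 + C 4*X 2 + C 2*X 3 + C 2*X 4 + C 4*X 5 + C 2*X 6
def apoly2 : MvPolynomial (Fin 8) ℝ := C 2*X 0 + C 4*X 1 + C 4*X 3 + C 2*X 5 + C 4*X 6 + C 2*X 7
def apoly3 : MvPolynomial (Fin 8) ℝ := C 4*X 0 + C 2*X 1 + C 4*X 2 + C 2*X 4 + C 2*X 6 + C 4*X 7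
def apoly4 : MvPolynomial (Fin 8) ℝ := C 4*X 0 + C 2*X 1 + C 2*X 3 + C 4*X 5 + C 2*X 6 + C 4*X 7
def apoly5 : MvPolynomial (Fin 8) ℝ := C 2*X 0 + C 4*X 1 + C 2*X 2 + C 4*X 4 + C 4*X 6 + C 2*X 7
def apoly6 : MvPolynomial (Fin 8) ℝ := C 2*X 1 + C 4*X 2 + C 2*X 3 + C 2*X 4 + C 4*X 5 + C 4*X 7
def apoly7 : MvPolynomial (Fin 8) ℝ := C 2*X 0 + C 2*X 2 + C 4*X 3 + C 4*X 4 + C 2*X 5 + C 4*X 6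

lemma apoly0_homog : apoly0.IsHomogeneous 1 := by
  unfold apoly0
  repeat' apply MvPolynomial.IsHomogeneous.add
  all_goals exact isHomogeneous_C_mul_X _ _
lemma apoly1_homog : apoly1.IsHomogeneous 1 := by
  unfold apoly1
  repeat' apply MvPolynomial.IsHomogeneous.add
  all_goals exact isHomogeneous_C_mul_X _ _
lemma apoly2_homog : apoly2.IsHomogeneous 1 := by
  unfold apoly2
  repeat' apply MvPolynomial.IsHomogeneous.add
  all_goals exact isHomogeneous_C_mul_X _ _
lemma apoly3_homog : apoly3.IsHomogeneous 1 := by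
  unfold apoly3
  repeat' apply MvPolynomial.IsHomogeneous.add
  all_goals exact isHomogeneous_C_mul_X _ _
lemma apoly4_homog : apoly4.IsHomogeneous 1 := by
  unfold apoly4
  repeat' apply MvPolynomial.IsHomogeneous.add
  all_goals exact isHomogeneous_C_mul_X _ _
lemma apoly5_homog : apoly5.IsHomogeneous 1 := by
  unfold apoly5
  repeat' apply MvPolynomial.IsHomogeneous.add
  all_goals exact isHomogeneous_C_mul_X _ _
lemma apoly6_homog : apoly6.IsHomogeneous 1 := by
  unfold apoly6
  repeat' apply MvPolynomial.IsHomogeneous.add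
  all_goals exact isHomogeneous_C_mul_X _ _
lemma apoly7_homog : apoly7.IsHomogeneous 1 := by
  unfold apoly7
  repeat' apply MvPolynomial.IsHomogeneous.add
  all_goals exact isHomogeneous_C_mul_X _ _

lemma hA0 : dop 8 ((∑ i, X i) ^ 2 * X 0) Fhex = apoly0 := by
  rw [mul_comm, dop_mul_apply, hQ, dop_X_apply]
  simp [Qp, apoly0, pderiv_X_self, pderiv_X_of_ne, pderiv_mul, pderiv_C_mul, pderiv_ofNat, map_ofNat]
  all_goals ring
lemma hA1 : dop 8 ((∑ i, X i) ^ 2 * X 1) Fhex = apoly1 := by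
  rw [mul_comm, dop_mul_apply, hQ, dop_X_apply]
  simp [Qp, apoly1, pderiv_X_self, pderiv_X_of_ne, pderiv_mul, pderiv_C_mul, pderiv_ofNat, map_ofNat]
  all_goals ring
lemma hA2 : dop 8 ((∑ i, X i) ^ 2 * X 2) Fhex = apoly2 := by
  rw [mul_comm, dop_mul_apply, hQ, dop_X_apply]
  simp [Qp, apoly2, pderiv_X_self, pderiv_X_of_ne, pderiv_mul, pderiv_C_mul, pderiv_ofNat, map_ofNat]
  all_goals ring
lemma hA3 : dop 8 ((∑ i, X i) ^ 2 * X 3) Fhex = apoly3 := by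
  rw [mul_comm, dop_mul_apply, hQ, dop_X_apply]
  simp [Qp, apoly3, pderiv_X_self, pderiv_X_of_ne, pderiv_mul, pderiv_C_mul, pderiv_ofNat, map_ofNat]
  all_goals ring
lemma hA4 : dop 8 ((∑ i, X i) ^ 2 * X 4) Fhex = apoly4 := by
  rw [mul_comm, dop_mul_apply, hQ, dop_X_apply]
  simp [Qp, apoly4, pderiv_X_self, pderiv_X_of_ne, pderiv_mul, pderiv_C_mul, pderiv_ofNat, map_ofNat]
  all_goals ring
lemma hA5 : dop 8 ((∑ i, X i) ^ 2 * X 5) Fhex = apoly5 := by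
  rw [mul_comm, dop_mul_apply, hQ, dop_X_apply]
  simp [Qp, apoly5, pderiv_X_self, pderiv_X_of_ne, pderiv_mul, pderiv_C_mul, pderiv_ofNat, map_ofNat]
  all_goals ring
lemma hA6 : dop 8 ((∑ i, X i) ^ 2 * X 6) Fhex = apoly6 := by
  rw [mul_comm, dop_mul_apply, hQ, dop_X_apply]
  simp [Qp, apoly6, pderiv_X_self, pderiv_X_of_ne, pderiv_mul, pderiv_C_mul, pderiv_ofNat, map_ofNat]
  all_goals ring
lemma hA7 : dop 8 ((∑ i, X i) ^ 2 * X 7) Fhex = apoly7 := by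
  rw [mul_comm, dop_mul_apply, hQ, dop_X_apply]
  simp [Qp, apoly7, pderiv_X_self, pderiv_X_of_ne, pderiv_mul, pderiv_C_mul, pderiv_ofNat, map_ofNat]
  all_goals ring

lemma dop_L2_lin (c : Fin 8 → ℝ) :
    dop 8 ((∑ i, X i) ^ 2 * (∑ i, C (c i) * X i)) Fhex = C (c 0) * apoly0 + C (c 1) * apoly1 + C (c 2) * apoly2 + C (c 3) * apoly3 + C (c 4) * apoly4 + C (c 5) * apoly5 + C (c 6) * apoly6 + C (c 7) * apoly7 := by
  rw [show ((∑ i, X i : MvPolynomial (Fin 8) ℝ)) ^ 2 * (∑ i, C (c i) * X i)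
      = C (c 0) * ((∑ i, X i) ^ 2 * X 0) + C (c 1) * ((∑ i, X i) ^ 2 * X 1) + C (c 2) * ((∑ i, X i) ^ 2 * X 2) + C (c 3) * ((∑ i, X i) ^ 2 * X 3) + C (c 4) * ((∑ i, X i) ^ 2 * X 4) + C (c 5) * ((∑ i, X i) ^ 2 * X 5) + C (c 6) * ((∑ i, X i) ^ 2 * X 6) + C (c 7) * ((∑ i, X i) ^ 2 * X 7) from by simp only [Fin.sum_univ_eight]; ring]
  simp only [dop_add_apply, dop_C_mul_apply, smul_eq_C_mul, hA0, hA1, hA2, hA3, hA4, hA5, hA6, hA7]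
lemma inj1 (r : MvPolynomial (Fin 8) ℝ) (hr : r.IsHomogeneous 1)
    (h0 : dop 8 ((∑ i, X i) ^ 2 * r) Fhex = 0) : r = 0 := by
  set c : Fin 8 → ℝ := fun i => coeff (Finsupp.single i 1) r with hc
  have hrd : r = ∑ i, C (c i) * X i := homog_one_eq r hr
  rw [hrd, dop_L2_lin] at h0
  have hE0 := congrArg (eval (fun k : Fin 8 => if k = 0 then (1:ℝ) else 0)) h0
  simp [apoly0, apoly1, apoly2, apoly3, apoly4, apoly5, apoly6, apoly7] at hE0
  have hE1 := congrArg (eval (fun k : Fin 8 => if k = 1 then (1:ℝ) else 0)) h0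
  simp [apoly0, apoly1, apoly2, apoly3, apoly4, apoly5, apoly6, apoly7] at hE1
  have hE2 := congrArg (eval (fun k : Fin 8 => if k = 2 then (1:ℝ) else 0)) h0
  simp [apoly0, apoly1, apoly2, apoly3, apoly4, apoly5, apoly6, apoly7] at hE2
  have hE3 := congrArg (eval (fun k : Fin 8 => if k = 3 then (1:ℝ) else 0)) h0
  simp [apoly0, apoly1, apoly2, apoly3, apoly4, apoly5, apoly6, apoly7] at hE3
  have hE4 := congrArg (eval (fun k : Fin 8 => if k = 4 then (1:ℝ) else 0)) h0
  simp [apoly0, apoly1, apoly2, apoly3, apoly4, apoly5, apoly6, apoly7] at hE4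
  have hE5 := congrArg (eval (fun k : Fin 8 => if k = 5 then (1:ℝ) else 0)) h0
  simp [apoly0, apoly1, apoly2, apoly3, apoly4, apoly5, apoly6, apoly7] at hE5
  have hE6 := congrArg (eval (fun k : Fin 8 => if k = 6 then (1:ℝ) else 0)) h0
  simp [apoly0, apoly1, apoly2, apoly3, apoly4, apoly5, apoly6, apoly7] at hE6
  have hE7 := congrArg (eval (fun k : Fin 8 => if k = 7 then (1:ℝ) else 0)) h0
  simp [apoly0, apoly1, apoly2, apoly3, apoly4, apoly5, apoly6, apoly7] at hE7
  have hc0 : c 0 = 0 := by linear_combination (2/18:ℝ) * hE0 + (2/18:ℝ) * hE1 - (1/18:ℝ) * hE2 + (2/18:ℝ) * hE3 + (2/18:ℝ) * hE4 - (1/18:ℝ) * hE5 - (4/18:ℝ) * hE6 - (1/18:ℝ) * hE7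
  have hc1 : c 1 = 0 := by linear_combination (2/18:ℝ) * hE0 + (2/18:ℝ) * hE1 + (2/18:ℝ) * hE2 - (1/18:ℝ) * hE3 - (1/18:ℝ) * hE4 + (2/18:ℝ) * hE5 - (1/18:ℝ) * hE6 - (4/18:ℝ) * hE7
  have hc2 : c 2 = 0 := by linear_combination - (1/18:ℝ) * hE0 + (2/18:ℝ) * hE1 + (2/18:ℝ) * hE2 + (2/18:ℝ) * hE3 - (4/18:ℝ) * hE4 - (1/18:ℝ) * hE5 + (2/18:ℝ) * hE6 - (1/18:ℝ) * hE7
  have hc3 : c 3 = 0 := by linear_combination (2/18:ℝ) * hE0 - (1/18:ℝ) * hE1 + (2/18:ℝ) * hE2 + (2/18:ℝ) * hE3 - (1/18:ℝ) * hE4 - (4/18:ℝ) * hE5 - (1/18:ℝ) * hE6 + (2/18:ℝ) * hE7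
  have hc4 : c 4 = 0 := by linear_combination (2/18:ℝ) * hE0 - (1/18:ℝ) * hE1 - (4/18:ℝ) * hE2 - (1/18:ℝ) * hE3 + (2/18:ℝ) * hE4 + (2/18:ℝ) * hE5 - (1/18:ℝ) * hE6 + (2/18:ℝ) * hE7
  have hc5 : c 5 = 0 := by linear_combination - (1/18:ℝ) * hE0 + (2/18:ℝ) * hE1 - (1/18:ℝ) * hE2 - (4/18:ℝ) * hE3 + (2/18:ℝ) * hE4 + (2/18:ℝ) * hE5 + (2/18:ℝ) * hE6 - (1/18:ℝ) * hE7
  have hc6 : c 6 = 0 := by linear_combination - (4/18:ℝ) * hE0 - (1/18:ℝ) * hE1 + (2/18:ℝ) * hE2 - (1/18:ℝ) * hE3 - (1/18:ℝ) * hE4 + (2/18:ℝ) * hE5 + (2/18:ℝ) * hE6 + (2/18:ℝ) * hE7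
  have hc7 : c 7 = 0 := by linear_combination - (1/18:ℝ) * hE0 - (4/18:ℝ) * hE1 - (1/18:ℝ) * hE2 + (2/18:ℝ) * hE3 + (2/18:ℝ) * hE4 - (1/18:ℝ) * hE5 + (2/18:ℝ) * hE6 + (2/18:ℝ) * hE7
  rw [hrd, Fin.sum_univ_eight, hc0, hc1, hc2, hc3, hc4, hc5, hc6, hc7]
  simp

def qpoly (b : Fin 8 → ℝ) : MvPolynomial (Fin 8) ℝ := C ((2*b 0 + 2*b 1 - b 2 + 2*b 3 + 2*b 4 - b 5 - 4*b 6 - b 7)/18) * X 0 + C ((2*b 0 + 2*b 1 + 2*b 2 - b 3 - b 4 + 2*b 5 - b 6 - 4*b 7)/18) * X 1 + C ((- b 0 + 2*b 1 + 2*b 2 + 2*b 3 - 4*b 4 - b 5 + 2*b 6 - b 7)/18) * X 2 + C ((2*b 0 - b 1 + 2*b 2 + 2*b 3 - b 4 - 4*b 5 - b 6 + 2*b 7)/18) * X 3 + C ((2*b 0 - b 1 - 4*b 2 - b 3 + 2*b 4 + 2*b 5 - b 6 + 2*b 7)/18) * X 4 + C ((- b 0 + 2*b 1 - b 2 - 4*b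 3 + 2*b 4 + 2*b 5 + 2*b 6 - b 7)/18) * X 5 + C ((- 4*b 0 - b 1 + 2*b 2 - b 3 - b 4 + 2*b 5 + 2*b 6 + 2*b 7)/18) * X 6 + C ((- b 0 - 4*b 1 - b 2 + 2*b 3 + 2*b 4 - b 5 + 2*b 6 + 2*b 7)/18) * X 7

lemma qpoly_homog (b : Fin 8 → ℝ) : (qpoly b).IsHomogeneous 1 := by
  unfold qpoly
  repeat' apply MvPolynomial.IsHomogeneous.add
  all_goals exact isHomogeneous_C_mul_X _ _

-- ===================== surjectivity key lemma =====================

lemma surj_key (b : Fin 8 → ℝ) :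
    dop 8 ((∑ i, X i) ^ 2 * qpoly b) Fhex = ∑ j, C (b j) * X j := by
  rw [show ((∑ i, X i : MvPolynomial (Fin 8) ℝ)) ^ 2 * qpoly b
      = C ((2*b 0 + 2*b 1 - b 2 + 2*b 3 + 2*b 4 - b 5 - 4*b 6 - b 7)/18) * ((∑ i, X i) ^ 2 * X 0)
      + C ((2*b 0 + 2*b 1 + 2*b 2 - b 3 - b 4 + 2*b 5 - b 6 - 4*b 7)/18) * ((∑ i, X i) ^ 2 * X 1)
      + C ((-b 0 + 2*b 1 + 2*b 2 + 2*b 3 - 4*b 4 - b 5 + 2*b 6 - b 7)/18) * ((∑ i, X i) ^ 2 * X 2)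
      + C ((2*b 0 - b 1 + 2*b 2 + 2*b 3 - b 4 - 4*b 5 - b 6 + 2*b 7)/18) * ((∑ i, X i) ^ 2 * X 3)
      + C ((2*b 0 - b 1 - 4*b 2 - b 3 + 2*b 4 + 2*b 5 - b 6 + 2*b 7)/18) * ((∑ i, X i) ^ 2 * X 4)
      + C ((-b 0 + 2*b 1 - b 2 - 4*b 3 + 2*b 4 + 2*b 5 + 2*b 6 - b 7)/18) * ((∑ i, X i) ^ 2 * X 5)
      + C ((-4*b 0 - b 1 + 2*b 2 - b 3 - b 4 + 2*b 5 + 2*b 6 + 2*b 7)/18) * ((∑ i, X i) ^ 2 * X 6)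
      + C ((-b 0 - 4*b 1 - b 2 + 2*b 3 + 2*b 4 - b 5 + 2*b 6 + 2*b 7)/18) * ((∑ i, X i) ^ 2 * X 7)
      from by simp only [qpoly]; ring]
  simp only [dop_add_apply, dop_C_mul_apply, smul_eq_C_mul, hA0, hA1, hA2, hA3, hA4, hA5,
    hA6, hA7]
  apply MvPolynomial.IsHomogeneous.funext (n := 1)
  · repeat' apply MvPolynomial.IsHomogeneous.add
    · exact apoly0_homog.C_mul _
    · exact apoly1_homog.C_mul _
    · exact apoly2_homog.C_mul _
    · exact apoly3_homog.C_mul _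
    · exact apoly4_homog.C_mul _
    · exact apoly5_homog.C_mul _
    · exact apoly6_homog.C_mul _
    · exact apoly7_homog.C_mul _
  · exact IsHomogeneous.sum _ _ _ fun j _ => isHomogeneous_C_mul_X _ _
  · intro r
    simp only [Fin.sum_univ_eight, apoly0, apoly1, apoly2, apoly3, apoly4, apoly5, apoly6,
      apoly7, map_add, map_mul, eval_C, eval_X]
    ring

-- ===================== the Lefschetz witness =====================

def fw : MvPolynomial (Fin 8) ℝ := X 0 + X 1 + X 2 + X 3 - X 4 - X 5 - X 6 - X 7

lemma fw_homog : fw.IsHomogeneous 1 := by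
  unfold fw
  repeat' first
    | apply MvPolynomial.IsHomogeneous.sub
    | apply MvPolynomial.IsHomogeneous.add
    | exact isHomogeneous_X _ _

lemma dop_fw_apply (G : MvPolynomial (Fin 8) ℝ) :
    dop 8 fw G = pderiv 0 G + pderiv 1 G + pderiv 2 G + pderiv 3 G
      - pderiv 4 G - pderiv 5 G - pderiv 6 G - pderiv 7 G := by
  simp only [fw, dop_add_apply, dop_sub_apply, dop_X_apply]

lemma hw1 : dop 8 ((∑ i, X i) ^ 3 * fw) Fhex = 0 := by
  rw [mul_comm, dop_mul_apply, hL3, dop_fw_apply]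
  simp [G1, pderiv_C_mul, pderiv_X_self, pderiv_X_of_ne, pderiv_mul, pderiv_ofNat, map_ofNat]
  all_goals ring

lemma hw2 : dop 8 ((∑ i, X i) ^ 2 * fw * fw) Fhex = C 16 := by
  rw [show ((∑ i, X i : MvPolynomial (Fin 8) ℝ)) ^ 2 * fw * fw
      = fw * (fw * (∑ i, X i) ^ 2) from by ring, dop_mul_apply, dop_mul_apply, hQ]
  rw [show dop 8 fw Qp = C 2*X 0 + C 2*X 1 + C 2*X 2 + C 2*X 3
      - C 2*X 4 - C 2*X 5 - C 2*X 6 - C 2*X 7 from by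
    rw [dop_fw_apply]
    simp [Qp, pderiv_C_mul, pderiv_X_self, pderiv_X_of_ne, pderiv_mul, pderiv_ofNat, map_ofNat]
    all_goals ring]
  rw [dop_fw_apply]
  simp [pderiv_C_mul, pderiv_X_self, pderiv_X_of_ne, pderiv_mul, pderiv_ofNat, map_ofNat]
  all_goals norm_num

lemma hfw_ne : dop 8 fw Fhex ≠ 0 := by
  intro h
  rw [dop_fw_apply] at h
  have h2 := congrArg (eval (fun k : Fin 8 => if k = 1 ∨ k = 2 ∨ k = 3 then (1:ℝ) else 0)) h
  simp [Fhex, pderiv_X_self, pderiv_X_of_ne, pderiv_mul] at h2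

-- ===================== grade helpers =====================

lemma Fhex_homog : Fhex.IsHomogeneous 4 := by
  have h : ∀ a b c d : Fin 8, (X a * X b * X c * X d : MvPolynomial (Fin 8) ℝ).IsHomogeneous 4 := by
    intro a b c d
    have := (((isHomogeneous_X ℝ a).mul (isHomogeneous_X ℝ b)).mul
      (isHomogeneous_X ℝ c)).mul (isHomogeneous_X ℝ d)
    norm_num at this
    exact this
  unfold Fhex
  repeat' apply MvPolynomial.IsHomogeneous.add
  all_goals apply h

lemma L_homog : (∑ i, X i : MvPolynomial (Fin 8) ℝ).IsHomogeneous 1 :=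
  IsHomogeneous.sum _ _ _ fun i _ => isHomogeneous_X ℝ i

lemma mem_grade_iff (k : ℕ) (x : AF Fhex) :
    x ∈ gradeA Fhex k ↔ ∃ p, p.IsHomogeneous k ∧ Ideal.Quotient.mk (annIdeal Fhex) p = x := by
  constructor
  · rintro ⟨p, hp, rfl⟩
    exact ⟨p, (mem_homogeneousSubmodule _ _).mp hp, rfl⟩
  · rintro ⟨p, hp, rfl⟩
    exact ⟨p, (mem_homogeneousSubmodule _ _).mpr hp, rfl⟩

lemma mk_pow_mul (m : ℕ) (p : MvPolynomial (Fin 8) ℝ) :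
    (Ideal.Quotient.mk (annIdeal Fhex) (∑ i, X i)) ^ m * Ideal.Quotient.mk (annIdeal Fhex) p
      = Ideal.Quotient.mk (annIdeal Fhex) ((∑ i, X i) ^ m * p) := by
  rw [← map_pow, ← map_mul]

-- ===================== main theorem =====================

/-- `ℓ = ∂₁ + ⋯ + ∂₈` is a strong Lefschetz element of the algebra associated to the regular
hexahedron (so the algebra has the strong Lefschetz property), but the algebra does not
satisfy the Hodge–Riemann relation with respect to `ℓ`. -/
theorem hexahedron_sl_element_but_not_hrr :
    IsSLelem Fhex 4 (Ideal.Quotient.mk (annIdeal Fhex) (∑ i, X i)) ∧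
      HasSLP Fhex 4 ∧ ¬ SatisfiesHRR Fhex 4 (∑ i, X i) := by
  have hmain : IsSLelem Fhex 4 (Ideal.Quotient.mk (annIdeal Fhex) (∑ i, X i)) := by
    intro k hk
    have hk2 : k ≤ 2 := by omega
    interval_cases k
    · -- k = 0
      simp only [show (4 - 2 * 0 : ℕ) = 4 from rfl, show (4 - 0 : ℕ) = 4 from rfl]
      refine ⟨?_, ?_, ?_⟩
      · intro x hx
        obtain ⟨p, hp, rfl⟩ := (mem_grade_iff _ _).mp hx
        simp only [mk_pow_mul]
        refine (mem_grade_iff _ _).mpr ⟨_, ?_, rfl⟩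
        have := (L_homog.pow 4).mul hp
        norm_num at this
        exact this
      · intro x hx y hy hxy
        obtain ⟨p, hp, rfl⟩ := (mem_grade_iff _ _).mp hx
        obtain ⟨q, hq, rfl⟩ := (mem_grade_iff _ _).mp hy
        have hp' := homog_zero_eq p hp
        have hq' := homog_zero_eq q hq
        rw [hp', hq'] at hxy ⊢
        simp only [mk_pow_mul, Ideal.Quotient.eq] at hxy
        have h0 : dop 8 ((∑ i, X i) ^ 4 * C (constantCoeff p)
            - (∑ i, X i) ^ 4 * C (constantCoeff q)) Fhex = 0 := hxy
        rw [dop_sub_apply, mul_comm ((∑ i, X i : MvPolynomial (Fin 8) ℝ) ^ 4),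
          mul_comm ((∑ i, X i : MvPolynomial (Fin 8) ℝ) ^ 4), dop_C_mul_apply,
          dop_C_mul_apply, h144] at h0
        have h1 : (C ((constantCoeff p - constantCoeff q) * 144) : MvPolynomial (Fin 8) ℝ) = 0 := by
          rw [C_mul, ← smul_eq_C_mul, sub_smul]; exact h0
        have h2 := congrArg constantCoeff h1
        simp only [constantCoeff_C, map_zero] at h2
        have h3 : constantCoeff p = constantCoeff q := by linarith
        rw [h3]
      · intro x hx
        obtain ⟨p, hp, rfl⟩ := (mem_grade_iff _ _).mp hx
        have hd : (dop 8 p Fhex).IsHomogeneous 0 := by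
          have := dop_isHomogeneous hp Fhex_homog
          norm_num at this
          exact this
        have hply := homog_zero_eq _ hd
        refine ⟨Ideal.Quotient.mk _ (C (constantCoeff (dop 8 p Fhex) / 144)),
          (mem_grade_iff _ _).mpr ⟨C (constantCoeff (dop 8 p Fhex) / 144), isHomogeneous_C _ _, rfl⟩, ?_⟩
        simp only [mk_pow_mul, Ideal.Quotient.eq]
        show dop 8 _ Fhex = 0
        rw [dop_sub_apply, mul_comm ((∑ i, X i : MvPolynomial (Fin 8) ℝ) ^ 4),
          dop_C_mul_apply, h144, smul_eq_C_mul, ← C_mul,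
          div_mul_cancel₀ _ (by norm_num : (144:ℝ) ≠ 0), ← hply, sub_self]
    · -- k = 1
      simp only [show (4 - 2 * 1 : ℕ) = 2 from rfl, show (4 - 1 : ℕ) = 3 from rfl]
      refine ⟨?_, ?_, ?_⟩
      · intro x hx
        obtain ⟨p, hp, rfl⟩ := (mem_grade_iff _ _).mp hx
        simp only [mk_pow_mul]
        refine (mem_grade_iff _ _).mpr ⟨_, ?_, rfl⟩
        have := (L_homog.pow 2).mul hp
        norm_num at this
        exact this
      · intro x hx y hy hxy
        obtain ⟨p, hp, rfl⟩ := (mem_grade_iff _ _).mp hx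
        obtain ⟨q, hq, rfl⟩ := (mem_grade_iff _ _).mp hy
        simp only [mk_pow_mul, Ideal.Quotient.eq] at hxy
        have h' : dop 8 ((∑ i, X i) ^ 2 * p - (∑ i, X i) ^ 2 * q) Fhex = 0 := hxy
        rw [dop_sub_apply] at h'
        have h0 : dop 8 ((∑ i, X i) ^ 2 * (p - q)) Fhex = 0 := by
          rw [show ((∑ i, X i : MvPolynomial (Fin 8) ℝ)) ^ 2 * (p - q)
            = (∑ i, X i) ^ 2 * p - (∑ i, X i) ^ 2 * q from by ring, dop_sub_apply]
          exact h'
        have hr0 := inj1 (p - q) (hp.sub hq) h0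
        rw [Ideal.Quotient.eq, hr0]
        exact Ideal.zero_mem _
      · intro x hx
        obtain ⟨p, hp3, rfl⟩ := (mem_grade_iff _ _).mp hx
        have hG : (dop 8 p Fhex).IsHomogeneous 1 := by
          have := dop_isHomogeneous hp3 Fhex_homog
          norm_num at this
          exact this
        have hGd := homog_one_eq _ hG
        refine ⟨Ideal.Quotient.mk _ (qpoly fun j => coeff (Finsupp.single j 1) (dop 8 p Fhex)),
          (mem_grade_iff _ _).mpr ⟨_, qpoly_homog _, rfl⟩, ?_⟩
        simp only [mk_pow_mul, Ideal.Quotient.eq]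
        show dop 8 _ Fhex = 0
        rw [dop_sub_apply, surj_key, ← hGd, sub_self]
    · -- k = 2
      simp only [show (4 - 2 * 2 : ℕ) = 0 from rfl, show (4 - 2 : ℕ) = 2 from rfl,
        pow_zero, one_mul]
      exact Set.bijOn_id _
  refine ⟨hmain, ⟨_, (mem_grade_iff _ _).mpr ⟨∑ i, X i, L_homog, rfl⟩, hmain⟩, ?_⟩
  intro hrr
  have hne : Ideal.Quotient.mk (annIdeal Fhex) fw ≠ 0 := by
    intro h
    exact hfw_ne (Ideal.Quotient.eq_zero_iff_mem.mp h)
  have hmem : fw ∈ homogeneousSubmodule (Fin 8) ℝ 1 :=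
    (mem_homogeneousSubmodule _ _).mpr fw_homog
  have h1 : dop 8 ((∑ i, X i) ^ (4 - 2 * 1 + 1) * fw) Fhex = 0 := by
    simp only [show (4 - 2 * 1 + 1 : ℕ) = 3 from rfl]
    exact hw1
  have := hrr 1 (by norm_num) fw hmem h1 hne
  simp only [show (4 - 2 * 1 : ℕ) = 2 from rfl, hw2, constantCoeff_C, pow_one] at this
  norm_num at this

end
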